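/- Let A be the monic companion matrix with factorization A = Q(I + (αx - e_n)y^T), where Q is the cyclic shift matrix. Writing adj(λI - Q) = ∑_{k=0}^{n-1} G_k λ^k and det(λI - Q) = λ^n - 1, the coefficients of the characteristic polynomial of A satisfy: the coefficient of λ^k in det(λI - A) equals q_k - y^T G_k Q(αx - e_n), where q_n = 1, q_0 = -1, and q_k = 0 otherwise. -/

import Mathlib

open Matrix Finset

lemma detQ_aux (n : ℕ) (hn : 0 < n) (Q : Matrix (Fin n) (Fin n) ℂ)
    (hQ : ∀ i j : Fin n, Q i j =
      if (i : ℕ) = (j : ℕ) + 1 ∨ ((i : ℕ) = 0 ∧ (j : ℕ) = n - 1) then 1 else 0)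
    (z : ℂ) : (z • (1 : Matrix (Fin n) (Fin n) ℂ) - Q).det = z ^ n - 1 := by
  obtain ⟨m, rfl⟩ : ∃ m, n = m + 1 := ⟨n - 1, (Nat.succ_pred_eq_of_pos hn).symm⟩
  set M := z • (1 : Matrix (Fin (m+1)) (Fin (m+1)) ℂ) - Q with hM
  have hMe : ∀ i j : Fin (m+1), M i j =
      (if (i : ℕ) = (j : ℕ) then z else 0) -
        (if (i : ℕ) = (j : ℕ) + 1 ∨ ((i : ℕ) = 0 ∧ (j : ℕ) = m) then 1 else 0) := by
    intro i j
    rw [hM, Matrix.sub_apply, Matrix.smul_apply, Matrix.one_apply, hQ]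
    simp only [Fin.ext_iff, Nat.add_sub_cancel, smul_eq_mul, mul_ite, mul_one, mul_zero]
  rcases m with _ | m
  · rw [Matrix.det_fin_one, hMe]
    norm_num
  · rw [Matrix.det_succ_row_zero]
    have hz : ∀ j : Fin (m+2), j ≠ 0 → j ≠ Fin.last (m+1) → M 0 j = 0 := by
      intro j hj0 hjl
      have h1 : (j : ℕ) ≠ 0 := fun h => hj0 (Fin.ext h)
      have h2 : (j : ℕ) ≠ m + 1 := fun h => hjl (Fin.ext h)
      rw [hMe]
      rw [if_neg (by omega), if_neg (by simp; omega), sub_zero]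
    rw [Finset.sum_eq_add (0 : Fin (m+2)) (Fin.last (m+1))
      (by simp [Fin.ext_iff]) (fun c _ hc => by rw [hz c hc.1 hc.2]; ring)
      (by simp) (by simp)]
    have h00 : M 0 0 = z := by
      rw [hMe]; rw [if_pos rfl, if_neg (by simp), sub_zero]
    have h0l : M 0 (Fin.last (m+1)) = -1 := by
      rw [hMe]
      rw [if_neg (by simp [Fin.val_last]), if_pos (by simp [Fin.val_last]), zero_sub]
    have hd0 : (M.submatrix Fin.succ (Fin.succAbove 0)).det = z ^ (m+1) := by
      rw [Fin.succAbove_zero, Matrix.det_of_lowerTriangular]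
      · rw [Finset.prod_congr rfl (fun i _ => show M i.succ i.succ = z by
          rw [hMe]; rw [if_pos rfl, if_neg (by simp only [Fin.val_succ]; omega), sub_zero])]
        simp
      · intro i j hij
        have hlt : (i : ℕ) < (j : ℕ) := hij
        show M i.succ j.succ = 0
        rw [hMe]; simp only [Fin.val_succ]
        rw [if_neg (by omega), if_neg (by omega), sub_zero]
    have hdl : (M.submatrix Fin.succ ((Fin.last (m+1)).succAbove)).det = (-1) ^ (m+1) := by
      rw [Fin.succAbove_last, Matrix.det_of_upperTriangular]
      · rw [Finset.prod_congr rfl (fun i _ => show M i.succ i.castSucc = -1 by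
          rw [hMe]
          rw [if_neg (by simp only [Fin.val_succ, Fin.coe_castSucc]; omega),
            if_pos (Or.inl (by simp only [Fin.val_succ, Fin.coe_castSucc])), zero_sub])]
        simp
      · intro i j hij
        have hlt : (j : ℕ) < (i : ℕ) := hij
        show M i.succ j.castSucc = 0
        rw [hMe]; simp only [Fin.val_succ, Fin.coe_castSucc]
        rw [if_neg (by omega), if_neg (by omega), sub_zero]
    rw [h00, h0l, hd0, hdl]
    simp [Fin.val_last]
    rw [← pow_add, Even.neg_one_pow ⟨m + 1, by ring⟩]
    ring

lemma dot_sum_mulVec (n : ℕ) (G : ℕ → Matrix (Fin n) (Fin n) ℂ) (w y : Fin n → ℂ) (z : ℂ) :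
    y ⬝ᵥ ((∑ k ∈ Finset.range n, z ^ k • G k) *ᵥ w)
      = ∑ k ∈ Finset.range n, z ^ k * (y ⬝ᵥ (G k *ᵥ w)) := by
  have : (∑ k ∈ Finset.range n, z ^ k • G k) *ᵥ w
      = ∑ k ∈ Finset.range n, z ^ k • (G k *ᵥ w) := by
    rw [show (∑ k ∈ Finset.range n, z ^ k • G k) *ᵥ w
        = (Matrix.mulVec.addMonoidHomLeft w) (∑ k ∈ Finset.range n, z ^ k • G k) from rfl,
      map_sum]
    simp [Matrix.mulVec.addMonoidHomLeft, smul_mulVec]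
  rw [this]
  simp only [dotProduct, Finset.sum_apply, Finset.mul_sum, Pi.smul_apply, smul_eq_mul]
  rw [Finset.sum_comm]
  exact Finset.sum_congr rfl fun k _ => Finset.sum_congr rfl fun i _ => by ring


/-- Coefficients of the characteristic polynomial of the companion matrix
`A = Q(I + (αx - eₙ)yᵀ)`: with `adj(λI - Q) = ∑_{k<n} G_k λ^k` and
`det(λI - Q) = λⁿ - 1 = ∑ q_k λ^k`, the coefficient of `λ^k` in
`det(λI - A)` is `q_k - yᵀ G_k Q(αx - eₙ)`. -/
theorem companion_charpoly_coeffs (n : ℕ) (hn : 0 < n)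
    (Q A : Matrix (Fin n) (Fin n) ℂ) (x y e : Fin n → ℂ) (α : ℂ)
    (hQ : ∀ i j : Fin n, Q i j =
      if (i : ℕ) = (j : ℕ) + 1 ∨ ((i : ℕ) = 0 ∧ (j : ℕ) = n - 1) then 1 else 0)
    (he : ∀ i : Fin n, e i = if (i : ℕ) = n - 1 then 1 else 0)
    (hA : A = Q * (1 + Matrix.vecMulVec (α • x - e) y))
    (G : ℕ → Matrix (Fin n) (Fin n) ℂ) (q : ℕ → ℂ)
    (hGn : G n = 0)
    (hadj : ∀ z : ℂ, (z • (1 : Matrix (Fin n) (Fin n) ℂ) - Q).adjugate =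
      ∑ k ∈ Finset.range n, z ^ k • G k)
    (hq : ∀ k, q k = if k = n then 1 else if k = 0 then -1 else 0) :
    ∀ z : ℂ, (z • (1 : Matrix (Fin n) (Fin n) ℂ) - A).det =
      ∑ k ∈ Finset.range (n + 1),
        (q k - y ⬝ᵥ (G k *ᵥ (Q *ᵥ (α • x - e)))) * z ^ k := by
  have hdet : ∀ z : ℂ, (z • (1 : Matrix (Fin n) (Fin n) ℂ) - Q).det = z ^ n - 1 :=
    detQ_aux n hn Q hQ
  set w : Fin n → ℂ := Q *ᵥ (α • x - e) with hw
  -- RHS simplification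
  have hRHS : ∀ z : ℂ, ∑ k ∈ Finset.range (n + 1), (q k - y ⬝ᵥ (G k *ᵥ w)) * z ^ k
      = z ^ n - 1 - ∑ k ∈ Finset.range n, z ^ k * (y ⬝ᵥ (G k *ᵥ w)) := by
    intro z
    rw [Finset.sum_range_succ, hq n, if_pos rfl, hGn]
    have h1 : ∀ k ∈ Finset.range n, (q k - y ⬝ᵥ (G k *ᵥ w)) * z ^ k
        = q k * z ^ k - z ^ k * (y ⬝ᵥ (G k *ᵥ w)) := fun k _ => by ring
    rw [Finset.sum_congr rfl h1, Finset.sum_sub_distrib]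
    have h2 : ∑ k ∈ Finset.range n, q k * z ^ k = -1 := by
      rw [Finset.sum_eq_single 0]
      · rw [hq 0, if_neg hn.ne, if_pos rfl]; ring
      · intro k hk hk0
        rw [hq k, if_neg (Finset.mem_range.mp hk).ne, if_neg hk0, zero_mul]
      · intro h; exact absurd (Finset.mem_range.mpr hn) h
    rw [h2]
    simp [Matrix.zero_mulVec]
    ring
  -- matrix decomposition
  have hQV : Q * Matrix.vecMulVec (α • x - e) y = Matrix.vecMulVec w y := by
    ext i j
    simp [Matrix.mul_apply, Matrix.vecMulVec_apply, hw, Matrix.mulVec, dotProduct,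
      Finset.sum_mul, mul_assoc]
  have hsplit : ∀ z : ℂ, z • (1 : Matrix (Fin n) (Fin n) ℂ) - A
      = (z • (1 : Matrix (Fin n) (Fin n) ℂ) - Q) + Matrix.replicateCol Unit (-w) * Matrix.replicateRow Unit y := by
    intro z
    rw [hA, mul_add, mul_one, hQV, ← Matrix.vecMulVec_eq Unit]
    ext i j
    simp [Matrix.vecMulVec_apply]
    ring
  -- key identity on the dense set
  have key : ∀ z : ℂ, z ^ n - 1 ≠ 0 →
      (z • (1 : Matrix (Fin n) (Fin n) ℂ) - A).det
        = ∑ k ∈ Finset.range (n + 1), (q k - y ⬝ᵥ (G k *ᵥ w)) * z ^ k := by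
    intro z hz
    set M := z • (1 : Matrix (Fin n) (Fin n) ℂ) - Q with hM
    have hMdet : M.det = z ^ n - 1 := hdet z
    have hunit : IsUnit M.det := by rw [hMdet]; exact isUnit_iff_ne_zero.mpr hz
    rw [hsplit z, Matrix.det_add_replicateCol_mul_replicateRow hunit,
      Matrix.det_unique (1 + Matrix.replicateRow Unit y * M⁻¹ * Matrix.replicateCol Unit (-w))]
    have hentry : ((1 + Matrix.replicateRow Unit y * M⁻¹ * Matrix.replicateCol Unit (-w)) : Matrix Unit Unit ℂ)
        default default
        = 1 - Ring.inverse M.det * (y ⬝ᵥ (M.adjugate *ᵥ w)) := by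
      have : (Matrix.replicateRow Unit y * M⁻¹ * Matrix.replicateCol Unit (-w)) default default
          = y ⬝ᵥ (M⁻¹ *ᵥ (-w)) := by
        rw [Matrix.mul_assoc]
        simp [Matrix.mul_apply, Matrix.replicateRow, Matrix.replicateCol, Matrix.mulVec, dotProduct]
      rw [Matrix.add_apply, this, Matrix.one_apply_eq, Matrix.inv_def,
        smul_mulVec, dotProduct_smul, Matrix.mulVec_neg, dotProduct_neg]
      simp [smul_eq_mul]
      ring
    rw [hentry, hadj z, dot_sum_mulVec, hRHS z, hMdet]
    rw [mul_sub, mul_one, ← mul_assoc, Ring.mul_inverse_cancel _ (isUnit_iff_ne_zero.mpr hz), one_mul]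
  -- extend by continuity
  have hfin : ({z : ℂ | z ^ n - 1 = 0}).Finite := by
    have hp : (Polynomial.X ^ n - 1 : Polynomial ℂ) ≠ 0 := by
      intro h
      have := congrArg (Polynomial.eval 0) h
      simp [zero_pow hn.ne'] at this
    exact (Polynomial.finite_setOf_isRoot hp).subset (fun z hz => by
      simp only [Set.mem_setOf_eq, Polynomial.IsRoot, Polynomial.eval_sub,
        Polynomial.eval_pow, Polynomial.eval_X, Polynomial.eval_one]
      exact hz)
  have hdense : Dense {z : ℂ | z ^ n - 1 = 0}ᶜ := hfin.countable.dense_compl ℂ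
  have hcont1 : Continuous fun z : ℂ => (z • (1 : Matrix (Fin n) (Fin n) ℂ) - A).det :=
    Continuous.matrix_det ((continuous_id.smul continuous_const).sub continuous_const)
  have hcont2 : Continuous fun z : ℂ =>
      ∑ k ∈ Finset.range (n + 1), (q k - y ⬝ᵥ (G k *ᵥ w)) * z ^ k :=
    continuous_finset_sum _ fun k _ => continuous_const.mul (continuous_pow k)
  have := Continuous.ext_on hdense hcont1 hcont2 (fun z hz => key z hz)
  exact fun z => congrFun this z
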